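/- Replacement of λ^{-j}L_f^j𝟙 by the eigenfunction in Birkhoff sums: Let f:Ω→ℝ be continuous, λ>0 and h:Ω→ℝ a strictly positive continuous function such that ‖λ^{-j} L_f^j 𝟙 − h‖₀ → 0 as j→∞. Then for every continuous φ:Ω→ℝ, ‖(1/n)·(λ^{-n} L_f^n(S_nφ) − Σ_{j=0}^{n-1} λ^{-(n-j)} L_f^{n-j}(φ·h))‖₀ → 0 as n→∞. -/

import Mathlib

open MeasureTheory Filter Topology

noncomputable def dOmega {M : Type*} [MetricSpace M] (x y : ℕ → M) : ℝ :=
  ∑' n : ℕ, (1 / 2 : ℝ) ^ (n + 1) * dist (x n) (y n)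

/-- The sequence `(a, x₁, x₂, …)` obtained by prepending `a` to `x`. -/
def consSeq {M : Type*} (a : M) (x : ℕ → M) : ℕ → M := fun n => Nat.casesOn n a x

/-- The left shift `σ(x₁,x₂,…) = (x₂,x₃,…)`. -/
def shift {M : Type*} (x : ℕ → M) : ℕ → M := fun n => x (n + 1)

/-- The Ruelle transfer operator with a priori measure `μ` and potential `f`. -/
noncomputable def Ruelle {M : Type*} [MeasurableSpace M] (μ : Measure M)
    (f φ : (ℕ → M) → ℝ) : (ℕ → M) → ℝ :=
  fun x => ∫ a, Real.exp (f (consSeq a x)) * φ (consSeq a x) ∂μ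

/-- The `n`-th Birkhoff sum `S_n φ = Σ_{j=0}^{n-1} φ ∘ σ^j`. -/
noncomputable def birkhoff {M : Type*} (φ : (ℕ → M) → ℝ) (n : ℕ) : (ℕ → M) → ℝ :=
  fun x => ∑ j ∈ Finset.range n, φ (shift^[j] x)

/-- `f` is `α`-Hölder with respect to the metric `dOmega`. -/
def IsHolder {M : Type*} [MetricSpace M] (α : ℝ) (f : (ℕ → M) → ℝ) : Prop :=
  ∃ C : ℝ, 0 ≤ C ∧ ∀ x y, |f x - f y| ≤ C * dOmega x y ^ α

section Aux

variable {M : Type*} [MetricSpace M] [CompactSpace M] [MeasurableSpace M] [BorelSpace M]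

lemma continuous_consSeq : Continuous fun p : M × (ℕ → M) => consSeq p.1 p.2 := by
  apply continuous_pi
  intro n
  cases n with
  | zero => exact continuous_fst
  | succ k => exact (continuous_apply k).comp continuous_snd

lemma continuous_consSeq' (x : ℕ → M) : Continuous fun a : M => consSeq a x :=
  continuous_consSeq.comp (Continuous.prodMk continuous_id continuous_const)

lemma shift_consSeq (a : M) (x : ℕ → M) : shift (consSeq a x) = x := rfl

lemma continuous_shift : Continuous (shift : (ℕ → M) → (ℕ → M)) := by
  apply continuous_pi
  intro n
  exact continuous_apply (n + 1)

variable (μ : Measure M) [IsProbabilityMeasure μ] {f : (ℕ → M) → ℝ} (hf : Continuous f)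

include μ in
lemma nonempty_of_prob : Nonempty M := by
  by_contra hne
  rw [not_nonempty_iff] at hne
  have h1 : μ Set.univ = 1 := measure_univ
  rw [Set.univ_eq_empty_iff.2 hne, measure_empty] at h1
  exact zero_ne_one h1

include μ in
lemma exists_bound (g : (ℕ → M) → ℝ) (hg : Continuous g) :
    ∃ C : ℝ, 0 ≤ C ∧ ∀ x, |g x| ≤ C := by
  haveI : Nonempty M := nonempty_of_prob μ
  haveI : Nonempty (ℕ → M) := ⟨fun _ => Classical.arbitrary M⟩
  obtain ⟨x₀, hx₀⟩ := hg.abs.exists_forall_ge (by rw [cocompact_eq_bot]; exact tendsto_bot)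
  exact ⟨|g x₀|, abs_nonneg _, fun x => hx₀ x⟩

include hf in
lemma integrable_integrand (g : (ℕ → M) → ℝ) (hg : Continuous g) (x : ℕ → M) :
    Integrable (fun a => Real.exp (f (consSeq a x)) * g (consSeq a x)) μ := by
  have hc : Continuous fun a => Real.exp (f (consSeq a x)) * g (consSeq a x) :=
    (((Real.continuous_exp.comp hf).comp (continuous_consSeq' x)).mul
      (hg.comp (continuous_consSeq' x)))
  exact hc.integrable_of_hasCompactSupport (HasCompactSupport.of_compactSpace _)

include hf in
lemma ruelle_continuous (g : (ℕ → M) → ℝ) (hg : Continuous g) :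
    Continuous (Ruelle μ f g) := by
  have hk : Continuous fun y : ℕ → M => Real.exp (f y) * g y :=
    (Real.continuous_exp.comp hf).mul hg
  obtain ⟨C, hC0, hC⟩ := exists_bound μ _ hk
  apply continuous_of_dominated (bound := fun _ => C)
  · intro x
    exact ((hk.comp (continuous_consSeq' x)).aestronglyMeasurable)
  · intro x
    filter_upwards with a
    have := hC (consSeq a x)
    rw [abs_mul, abs_of_pos (Real.exp_pos _)] at this
    simpa [Real.norm_eq_abs, abs_mul, abs_of_pos (Real.exp_pos _)] using this
  · exact integrable_const C
  · filter_upwards with a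
    exact hk.comp (continuous_consSeq.comp (Continuous.prodMk continuous_const continuous_id))

include hf in
lemma iterate_continuous (n : ℕ) (g : (ℕ → M) → ℝ) (hg : Continuous g) :
    Continuous ((Ruelle μ f)^[n] g) := by
  induction n with
  | zero => simpa using hg
  | succ m ih =>
    rw [Function.iterate_succ_apply']
    exact ruelle_continuous μ hf _ ih

end Aux

section Aux2

variable {M : Type*} [MetricSpace M] [CompactSpace M] [MeasurableSpace M] [BorelSpace M]
variable (μ : Measure M) [IsProbabilityMeasure μ] {f : (ℕ → M) → ℝ} (hf : Continuous f)

lemma ruelle_const_mul (c : ℝ) (g : (ℕ → M) → ℝ) :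
    Ruelle μ f (fun y => c * g y) = fun x => c * Ruelle μ f g x := by
  funext x
  unfold Ruelle
  rw [← integral_const_mul]
  congr 1; funext a; ring

lemma iterate_const_mul (n : ℕ) (c : ℝ) (g : (ℕ → M) → ℝ) :
    (Ruelle μ f)^[n] (fun y => c * g y) = fun x => c * (Ruelle μ f)^[n] g x := by
  induction n generalizing g with
  | zero => simp
  | succ m ih =>
    rw [Function.iterate_succ_apply, ruelle_const_mul, ih]
    funext x
    rw [Function.iterate_succ_apply]

include hf in
lemma ruelle_sub (g₁ g₂ : (ℕ → M) → ℝ) (h1 : Continuous g₁) (h2 : Continuous g₂) :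
    Ruelle μ f (fun y => g₁ y - g₂ y) = fun x => Ruelle μ f g₁ x - Ruelle μ f g₂ x := by
  funext x
  unfold Ruelle
  rw [← integral_sub (integrable_integrand μ hf g₁ h1 x) (integrable_integrand μ hf g₂ h2 x)]
  congr 1; funext a; ring

include hf in
lemma iterate_sub (n : ℕ) (g₁ g₂ : (ℕ → M) → ℝ) (h1 : Continuous g₁) (h2 : Continuous g₂) :
    (Ruelle μ f)^[n] (fun y => g₁ y - g₂ y)
      = fun x => (Ruelle μ f)^[n] g₁ x - (Ruelle μ f)^[n] g₂ x := by
  induction n generalizing g₁ g₂ with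
  | zero => simp
  | succ m ih =>
    rw [Function.iterate_succ_apply, ruelle_sub μ hf g₁ g₂ h1 h2,
      ih _ _ (ruelle_continuous μ hf g₁ h1) (ruelle_continuous μ hf g₂ h2)]
    funext x
    rw [Function.iterate_succ_apply, Function.iterate_succ_apply]

include hf in
lemma ruelle_sum {ι : Type*} (s : Finset ι) (g : ι → (ℕ → M) → ℝ)
    (hg : ∀ i ∈ s, Continuous (g i)) :
    Ruelle μ f (fun y => ∑ i ∈ s, g i y) = fun x => ∑ i ∈ s, Ruelle μ f (g i) x := by
  funext x
  unfold Ruelle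
  rw [← integral_finset_sum s (fun i hi => integrable_integrand μ hf (g i) (hg i hi) x)]
  congr 1; funext a; rw [Finset.mul_sum]

include hf in
lemma iterate_sum {ι : Type*} (n : ℕ) (s : Finset ι) (g : ι → (ℕ → M) → ℝ)
    (hg : ∀ i ∈ s, Continuous (g i)) :
    (Ruelle μ f)^[n] (fun y => ∑ i ∈ s, g i y)
      = fun x => ∑ i ∈ s, (Ruelle μ f)^[n] (g i) x := by
  induction n generalizing g with
  | zero => simp
  | succ m ih =>
    rw [Function.iterate_succ_apply, ruelle_sum μ hf s g hg,
      ih _ (fun i hi => ruelle_continuous μ hf (g i) (hg i hi))]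
    funext x
    exact Finset.sum_congr rfl fun i _ => by rw [Function.iterate_succ_apply]

lemma ruelle_twist (g ψ : (ℕ → M) → ℝ) :
    Ruelle μ f (fun y => g y * ψ (shift y)) = fun x => ψ x * Ruelle μ f g x := by
  funext x
  unfold Ruelle
  simp only [shift_consSeq]
  rw [mul_comm, ← integral_mul_const]
  congr 1; funext a; ring

lemma iterate_twist (j : ℕ) (ψ : (ℕ → M) → ℝ) (g : (ℕ → M) → ℝ) :
    (Ruelle μ f)^[j] (fun y => g y * ψ (shift^[j] y)) = fun x => ψ x * (Ruelle μ f)^[j] g x := by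
  induction j generalizing g with
  | zero => funext x; simp [mul_comm]
  | succ m ih =>
    have e1 : (fun y => g y * ψ (shift^[m+1] y))
        = fun y => g y * (fun z => ψ (shift^[m] z)) (shift y) := by
      funext y
      rw [Function.iterate_succ_apply]
    rw [Function.iterate_succ_apply, e1, ruelle_twist μ (f := f) g (fun z => ψ (shift^[m] z))]
    have e2 : (fun x => (fun z => ψ (shift^[m] z)) x * Ruelle μ f g x)
        = fun y => (Ruelle μ f g) y * ψ (shift^[m] y) := by
      funext y; rw [mul_comm]
    rw [e2, ih]
    funext x
    rw [Function.iterate_succ_apply]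

include hf in
lemma ruelle_abs_le (g G : (ℕ → M) → ℝ) (hg : Continuous g) (hG : Continuous G)
    (hle : ∀ y, |g y| ≤ G y) (x : ℕ → M) : |Ruelle μ f g x| ≤ Ruelle μ f G x := by
  unfold Ruelle
  calc |∫ a, Real.exp (f (consSeq a x)) * g (consSeq a x) ∂μ|
      ≤ ∫ a, Real.exp (f (consSeq a x)) * |g (consSeq a x)| ∂μ := by
        simpa [Real.norm_eq_abs, abs_mul, abs_of_pos (Real.exp_pos _)] using
          norm_integral_le_integral_norm
          (f := fun a => Real.exp (f (consSeq a x)) * g (consSeq a x)) (μ := μ)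
    _ ≤ ∫ a, Real.exp (f (consSeq a x)) * G (consSeq a x) ∂μ := by
        apply integral_mono (integrable_integrand μ hf (fun y => |g y|) hg.abs x)
          (integrable_integrand μ hf G hG x)
        intro a
        dsimp only
        exact mul_le_mul_of_nonneg_left (hle _) (Real.exp_pos _).le

include hf in
lemma iterate_abs_le (m : ℕ) (g : (ℕ → M) → ℝ) (hg : Continuous g) (C : ℝ)
    (hC : ∀ y, |g y| ≤ C) (x : ℕ → M) :
    |(Ruelle μ f)^[m] g x| ≤ C * (Ruelle μ f)^[m] 1 x := by
  induction m generalizing x with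
  | zero => simpa using hC x
  | succ k ih =>
    rw [Function.iterate_succ_apply', Function.iterate_succ_apply']
    calc |Ruelle μ f ((Ruelle μ f)^[k] g) x|
        ≤ Ruelle μ f (fun y => C * (Ruelle μ f)^[k] 1 y) x :=
          ruelle_abs_le μ hf _ _ (iterate_continuous μ hf k g hg)
            (continuous_const.mul (iterate_continuous μ hf k 1 continuous_one)) ih x
      _ = C * Ruelle μ f ((Ruelle μ f)^[k] 1) x := by rw [ruelle_const_mul]

end Aux2

section MainId

variable {M : Type*} [MetricSpace M] [CompactSpace M] [MeasurableSpace M] [BorelSpace M]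
variable (μ : Measure M) [IsProbabilityMeasure μ] {f : (ℕ → M) → ℝ} (hf : Continuous f)

include hf in
lemma main_identity (φ h : (ℕ → M) → ℝ) (hφ : Continuous φ) (hh : Continuous h)
    (lam : ℝ) (hlam : 0 < lam) (n : ℕ) (x : ℕ → M) :
    (lam ^ n)⁻¹ * (Ruelle μ f)^[n] (birkhoff φ n) x
      - ∑ j ∈ Finset.range n, (lam ^ (n - j))⁻¹ * (Ruelle μ f)^[n - j] (fun y => φ y * h y) x
    = ∑ j ∈ Finset.range n, (lam ^ (n - j))⁻¹ *
        (Ruelle μ f)^[n - j]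
          (fun y => φ y * ((lam ^ j)⁻¹ * (Ruelle μ f)^[j] 1 y - h y)) x := by
  have hbirk : (Ruelle μ f)^[n] (birkhoff φ n)
      = fun z => ∑ j ∈ Finset.range n, (Ruelle μ f)^[n] (fun y => φ (shift^[j] y)) z := by
    have e : birkhoff φ n = fun y => ∑ j ∈ Finset.range n, φ (shift^[j] y) := rfl
    rw [e, iterate_sum μ hf n (Finset.range n) (fun j y => φ (shift^[j] y))
      (fun j _ => hφ.comp (continuous_shift.iterate j))]
  rw [hbirk, Finset.mul_sum, ← Finset.sum_sub_distrib]
  apply Finset.sum_congr rfl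
  intro j hj
  have hj' : j ≤ n := le_of_lt (Finset.mem_range.mp hj)
  have hne : lam ^ j ≠ 0 := pow_ne_zero _ hlam.ne'
  have hpow : lam ^ (n - j) * lam ^ j = lam ^ n := by
    rw [← pow_add, Nat.sub_add_cancel hj']
  have hiter : (Ruelle μ f)^[n] (fun y => φ (shift^[j] y))
      = (Ruelle μ f)^[n - j] ((Ruelle μ f)^[j] (fun y => φ (shift^[j] y))) := by
    rw [← Function.iterate_add_apply, Nat.sub_add_cancel hj']
  have htwist : (Ruelle μ f)^[j] (fun y => φ (shift^[j] y))
      = fun z => φ z * (Ruelle μ f)^[j] 1 z := by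
    rw [show (fun y => φ (shift^[j] y))
        = (fun y => (1 : (ℕ → M) → ℝ) y * φ (shift^[j] y)) from by funext y; simp]
    exact iterate_twist μ (f := f) j φ 1
  have hpull : (fun z => φ z * (Ruelle μ f)^[j] 1 z)
      = fun z => lam ^ j * ((fun y => φ y * ((lam ^ j)⁻¹ * (Ruelle μ f)^[j] 1 y)) z) := by
    funext z
    field_simp
  have hsplit : (fun y => φ y * ((lam ^ j)⁻¹ * (Ruelle μ f)^[j] 1 y - h y))
      = fun y => (fun y => φ y * ((lam ^ j)⁻¹ * (Ruelle μ f)^[j] 1 y)) y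
          - (fun y => φ y * h y) y := by
    funext y; ring
  have hg1c : Continuous (fun y => φ y * ((lam ^ j)⁻¹ * (Ruelle μ f)^[j] 1 y)) :=
    hφ.mul (continuous_const.mul (iterate_continuous μ hf j 1 continuous_one))
  rw [hiter, htwist, hpull, iterate_const_mul, hsplit,
    iterate_sub μ hf (n - j) _ (fun y => φ y * h y) hg1c (hφ.mul hh)]
  have hax : (lam ^ n)⁻¹ * lam ^ j = (lam ^ (n - j))⁻¹ := by
    rw [← hpow, mul_inv, mul_assoc, inv_mul_cancel₀ hne, mul_one]
  dsimp only
  rw [← mul_assoc, hax]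
  ring

end MainId

/-- Replacement of λ^{-j}L_f^j𝟙 by the eigenfunction in Birkhoff sums. -/
theorem birkhoff_sum_replace_eigenfunction
    {M : Type*} [MetricSpace M] [CompactSpace M] [MeasurableSpace M] [BorelSpace M]
    (μ : Measure M) [IsProbabilityMeasure μ]
    (hfull : ∀ U : Set M, IsOpen U → U.Nonempty → 0 < μ U)
    (f : (ℕ → M) → ℝ) (hf : Continuous f)
    (lam : ℝ) (hlam : 0 < lam)
    (h : (ℕ → M) → ℝ) (hhc : Continuous h) (hhpos : ∀ x, 0 < h x)
    (hconv : TendstoUniformly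
      (fun (j : ℕ) (x : ℕ → M) => (lam ^ j)⁻¹ * (Ruelle μ f)^[j] 1 x) h atTop) :
    ∀ φ : (ℕ → M) → ℝ, Continuous φ →
      TendstoUniformly
        (fun (n : ℕ) (x : ℕ → M) =>
          (n : ℝ)⁻¹ * ((lam ^ n)⁻¹ * (Ruelle μ f)^[n] (birkhoff φ n) x
            - ∑ j ∈ Finset.range n,
                (lam ^ (n - j))⁻¹ * (Ruelle μ f)^[n - j] (fun y => φ y * h y) x))
        (fun _ => 0) atTop := by
  intro φ hφ
  classical
  rw [Metric.tendstoUniformly_iff] at hconv ⊢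
  -- continuity of the error functions
  have hgc : ∀ j : ℕ, Continuous (fun y => (lam ^ j)⁻¹ * (Ruelle μ f)^[j] 1 y) :=
    fun j => continuous_const.mul (iterate_continuous μ hf j 1 continuous_one)
  have hEc : ∀ j : ℕ,
      Continuous (fun y => φ y * ((lam ^ j)⁻¹ * (Ruelle μ f)^[j] 1 y - h y)) :=
    fun j => hφ.mul ((hgc j).sub hhc)
  -- global bound B for the normalized iterates applied to 1
  obtain ⟨Hh, hHh0, hHh⟩ := exists_bound μ h hhc
  obtain ⟨N₁, hN₁⟩ := Filter.eventually_atTop.mp (hconv 1 one_pos)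
  have hCs : ∀ j : ℕ, ∃ C, 0 ≤ C ∧ ∀ x, |(lam ^ j)⁻¹ * (Ruelle μ f)^[j] 1 x| ≤ C :=
    fun j => exists_bound μ _ (hgc j)
  choose Cs hCs0 hCsB using hCs
  set B : ℝ := Hh + 1 + ∑ j ∈ Finset.range N₁, Cs j with hBdef
  have hsumCs : 0 ≤ ∑ j ∈ Finset.range N₁, Cs j :=
    Finset.sum_nonneg fun i _ => hCs0 i
  have hB0 : 0 ≤ B := by simp only [hBdef]; linarith
  have hB : ∀ (m : ℕ) (x : ℕ → M), (lam ^ m)⁻¹ * (Ruelle μ f)^[m] 1 x ≤ B := by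
    intro m x
    by_cases hm : N₁ ≤ m
    · have h1 := hN₁ m hm x
      rw [Real.dist_eq] at h1
      have h2 : (lam ^ m)⁻¹ * (Ruelle μ f)^[m] 1 x ≤ h x + 1 := by
        have := abs_le.mp h1.le
        linarith [this.1, this.2]
      have h3 : h x ≤ Hh := le_trans (le_abs_self _) (hHh x)
      simp only [hBdef]; linarith
    · have h1 : (lam ^ m)⁻¹ * (Ruelle μ f)^[m] 1 x ≤ Cs m :=
        le_trans (le_abs_self _) (hCsB m x)
      have h2 : Cs m ≤ ∑ j ∈ Finset.range N₁, Cs j :=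
        Finset.single_le_sum (fun i _ => hCs0 i) (Finset.mem_range.mpr (not_le.mp hm))
      simp only [hBdef]; linarith
  -- bound for φ
  obtain ⟨Cφ, hCφ0, hCφ⟩ := exists_bound μ φ hφ
  intro ε hε
  have hden : (0:ℝ) < 2 * (Cφ * B + 1) := by positivity
  set ε' : ℝ := ε / (2 * (Cφ * B + 1)) with hε'def
  have hε' : 0 < ε' := div_pos hε hden
  obtain ⟨N, hN⟩ := Filter.eventually_atTop.mp (hconv ε' hε')
  -- bounds for the error functions
  have hDex : ∀ j : ℕ, ∃ D, 0 ≤ D ∧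
      ∀ y, |φ y * ((lam ^ j)⁻¹ * (Ruelle μ f)^[j] 1 y - h y)| ≤ D :=
    fun j => exists_bound μ _ (hEc j)
  choose Dc hDc0 hDcB using hDex
  set A : ℝ := ∑ j ∈ Finset.range N, Dc j with hAdef
  have hA0 : 0 ≤ A := Finset.sum_nonneg fun i _ => hDc0 i
  set D : ℕ → ℝ := fun j => if j < N then Dc j else Cφ * ε' with hDdef
  have hD0 : ∀ j, 0 ≤ D j := by
    intro j
    simp only [hDdef]
    split
    · exact hDc0 j
    · positivity
  have hDb : ∀ (j : ℕ) (y : ℕ → M),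
      |φ y * ((lam ^ j)⁻¹ * (Ruelle μ f)^[j] 1 y - h y)| ≤ D j := by
    intro j y
    simp only [hDdef]
    split
    · exact hDcB j y
    · rename_i hjN
      have hj : N ≤ j := not_lt.mp hjN
      have h1 := hN j hj y
      rw [Real.dist_eq, abs_sub_comm] at h1
      rw [abs_mul]
      exact mul_le_mul (hCφ y) h1.le (abs_nonneg _) hCφ0
  -- choice of n₀
  set n₀ : ℕ := max 1 (⌈2 * A * B / ε⌉₊ + 1) with hn₀def
  filter_upwards [Filter.eventually_ge_atTop n₀] with n hn
  intro x
  have hn1 : 1 ≤ n := le_trans (le_max_left _ _) hn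
  have hnpos : (0:ℝ) < n := by exact_mod_cast hn1
  have hnlarge : 2 * A * B / ε < (n:ℝ) := by
    have h1 : (⌈2 * A * B / ε⌉₊ + 1 : ℕ) ≤ n := le_trans (le_max_right _ _) hn
    have h2 : ((⌈2 * A * B / ε⌉₊ : ℝ) + 1) ≤ (n:ℝ) := by exact_mod_cast h1
    have h3 := Nat.le_ceil (2 * A * B / ε)
    linarith
  rw [dist_comm, Real.dist_0_eq_abs]
  rw [main_identity μ hf φ h hφ hhc lam hlam n x]
  -- per-term bound
  have hterm : ∀ j ∈ Finset.range n,
      |(lam ^ (n - j))⁻¹ * (Ruelle μ f)^[n - j]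
        (fun y => φ y * ((lam ^ j)⁻¹ * (Ruelle μ f)^[j] 1 y - h y)) x| ≤ D j * B := by
    intro j _
    set m := n - j
    have hinv0 : (0:ℝ) ≤ (lam ^ m)⁻¹ := by positivity
    rw [abs_mul, abs_of_nonneg hinv0]
    calc (lam ^ m)⁻¹ * |(Ruelle μ f)^[m]
          (fun y => φ y * ((lam ^ j)⁻¹ * (Ruelle μ f)^[j] 1 y - h y)) x|
        ≤ (lam ^ m)⁻¹ * (D j * (Ruelle μ f)^[m] 1 x) := by
          apply mul_le_mul_of_nonneg_left _ hinv0
          exact iterate_abs_le μ hf m _ (hEc j) (D j) (hDb j) x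
      _ = D j * ((lam ^ m)⁻¹ * (Ruelle μ f)^[m] 1 x) := by ring
      _ ≤ D j * B := mul_le_mul_of_nonneg_left (hB m x) (hD0 j)
  -- sum of the D j
  have hsumD : ∑ j ∈ Finset.range n, D j ≤ A + n * (Cφ * ε') := by
    have h1 : ∀ j ∈ Finset.range n, D j ≤ (if j < N then Dc j else 0) + Cφ * ε' := by
      intro j _
      simp only [hDdef]
      split
      · have : (0:ℝ) ≤ Cφ * ε' := by positivity
        linarith
      · simp
    calc ∑ j ∈ Finset.range n, D j
        ≤ ∑ j ∈ Finset.range n, ((if j < N then Dc j else 0) + Cφ * ε') :=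
          Finset.sum_le_sum h1
      _ = (∑ j ∈ Finset.range n, if j < N then Dc j else 0) + n * (Cφ * ε') := by
          rw [Finset.sum_add_distrib, Finset.sum_const, Finset.card_range, nsmul_eq_mul]
      _ ≤ A + n * (Cφ * ε') := by
          have h2 : (∑ j ∈ Finset.range n, if j < N then Dc j else 0)
              = ∑ j ∈ (Finset.range n).filter (· < N), Dc j := by
            rw [Finset.sum_filter]
          have h3 : ∑ j ∈ (Finset.range n).filter (· < N), Dc j ≤ A := by
            apply Finset.sum_le_sum_of_subset_of_nonneg
            · intro j hjmem
              simp only [Finset.mem_filter, Finset.mem_range] at hjmem ⊢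
              exact hjmem.2
            · intro i _ _
              exact hDc0 i
          linarith
  -- final estimate
  have hε'bound : Cφ * ε' * B ≤ ε / 2 := by
    rw [hε'def, show Cφ * (ε / (2 * (Cφ * B + 1))) * B = Cφ * B * ε / (2 * (Cφ * B + 1)) from by
      ring, div_le_div_iff₀ hden two_pos]
    nlinarith [mul_nonneg hε.le (mul_nonneg hCφ0 hB0)]
  calc |(n:ℝ)⁻¹ * ∑ j ∈ Finset.range n, (lam ^ (n - j))⁻¹ *
        (Ruelle μ f)^[n - j]
          (fun y => φ y * ((lam ^ j)⁻¹ * (Ruelle μ f)^[j] 1 y - h y)) x|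
      = (n:ℝ)⁻¹ * |∑ j ∈ Finset.range n, (lam ^ (n - j))⁻¹ *
        (Ruelle μ f)^[n - j]
          (fun y => φ y * ((lam ^ j)⁻¹ * (Ruelle μ f)^[j] 1 y - h y)) x| := by
        rw [abs_mul, abs_of_nonneg (inv_nonneg.mpr hnpos.le)]
    _ ≤ (n:ℝ)⁻¹ * ∑ j ∈ Finset.range n, |(lam ^ (n - j))⁻¹ *
        (Ruelle μ f)^[n - j]
          (fun y => φ y * ((lam ^ j)⁻¹ * (Ruelle μ f)^[j] 1 y - h y)) x| :=
        mul_le_mul_of_nonneg_left (Finset.abs_sum_le_sum_abs _ _)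
          (inv_nonneg.mpr hnpos.le)
    _ ≤ (n:ℝ)⁻¹ * ∑ j ∈ Finset.range n, D j * B :=
        mul_le_mul_of_nonneg_left (Finset.sum_le_sum hterm) (inv_nonneg.mpr hnpos.le)
    _ = (n:ℝ)⁻¹ * ((∑ j ∈ Finset.range n, D j) * B) := by rw [Finset.sum_mul]
    _ ≤ (n:ℝ)⁻¹ * ((A + n * (Cφ * ε')) * B) := by
        apply mul_le_mul_of_nonneg_left _ (inv_nonneg.mpr hnpos.le)
        exact mul_le_mul_of_nonneg_right hsumD hB0
    _ = (n:ℝ)⁻¹ * (A * B) + ((n:ℝ)⁻¹ * (n:ℝ)) * (Cφ * ε' * B) := by ring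
    _ = (n:ℝ)⁻¹ * (A * B) + Cφ * ε' * B := by
        rw [inv_mul_cancel₀ hnpos.ne', one_mul]
    _ < ε := by
        have hfrac : (n:ℝ)⁻¹ * (A * B) < ε / 2 := by
          rw [inv_mul_eq_div, div_lt_iff₀ hnpos]
          rw [div_lt_iff₀ hε] at hnlarge
          nlinarith
        linarith
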